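/- Let N be the flow network obtained from a bipartite graph G = (U ∪ V, E) by the semi-matching reduction (source s, jobs U, machines V, cost centers C, sink t), and let f be a residual graph of a maximum flow with unit capacities. If every path from s to t in the residual graph has length at least d > 4, then the maximum residual flow value is at most 2|U|/(d-4). -/

import Mathlib

open Finset

/-- `IsDipath A s t l` means the list `l` of vertices forms a directed path from
`s` to `t` along the edge relation `A`. -/
def IsDipath {X : Type*} (A : X → X → Prop) (s t : X) (l : List X) : Prop :=
  l.Chain' A ∧ l.head? = some s ∧ l.getLast? = some t

lemma rel_of_mem_zip {α : Type*} {R : α → α → Prop} :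
    ∀ {l : List α}, l.Chain' R → ∀ x y : α, (x, y) ∈ l.zip l.tail → R x y := by
  intro l
  induction l with
  | nil => simp
  | cons a l ih =>
    intro h x y hm
    cases l with
    | nil => simp at hm
    | cons b r =>
      rw [List.Chain', List.isChain_cons_cons] at h
      simp only [List.tail_cons, List.zip_cons_cons, List.mem_cons, Prod.mk.injEq] at hm
      rcases hm with ⟨rfl, rfl⟩ | h1
      · exact h.1
      · exact ih h.2 x y h1

lemma sum_out_path {X : Type*} [Fintype X] [DecidableEq X] :
    ∀ (l : List X), l.Nodup → ∀ v : X,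
      (∑ y : X, if (v, y) ∈ l.zip l.tail then 1 else 0) =
        if v ∈ l.dropLast then (1 : ℕ) else 0 := by
  intro l
  induction l with
  | nil => simp
  | cons a l ih =>
    intro hn v
    cases l with
    | nil => simp
    | cons b r =>
      have hal : a ∉ b :: r := (List.nodup_cons.mp hn).1
      by_cases hva : v = a
      · subst hva
        have hcond : ∀ y : X, ((v, y) ∈ (v, b) :: (b :: r).zip r) ↔ y = b := by
          intro y
          constructor
          · intro hy
            rcases List.mem_cons.mp hy with h1 | h1
            · exact (Prod.mk.injEq .. ▸ h1).2
            · exact absurd (List.of_mem_zip h1).1 hal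
          · rintro rfl; exact List.mem_cons_self
        simp only [List.tail_cons, List.zip_cons_cons, hcond]
        simp [List.dropLast_cons₂]
      · have hcond : ∀ y : X, ((v, y) ∈ (a, b) :: (b :: r).zip r) ↔ (v, y) ∈ (b :: r).zip r := by
          intro y
          constructor
          · intro hy
            rcases List.mem_cons.mp hy with h1 | h1
            · exact absurd (Prod.mk.injEq .. ▸ h1).1 hva
            · exact h1
          · intro hy; exact List.mem_cons_of_mem _ hy
        refine (Finset.sum_congr rfl (fun y _ => if_congr (hcond y) rfl rfl)).trans ?_
        have := ih (List.nodup_cons.mp hn).2 v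
        simp only [List.tail_cons] at this
        refine this.trans ?_
        rw [List.dropLast_cons₂]
        simp [hva]

lemma sum_in_path {X : Type*} [Fintype X] [DecidableEq X] :
    ∀ (l : List X), l.Nodup → ∀ v : X,
      (∑ x : X, if (x, v) ∈ l.zip l.tail then 1 else 0) =
        if v ∈ l.tail then (1 : ℕ) else 0 := by
  intro l
  induction l with
  | nil => simp
  | cons a l ih =>
    intro hn v
    cases l with
    | nil => simp
    | cons b r =>
      have hbr : b ∉ r := (List.nodup_cons.mp (List.nodup_cons.mp hn).2).1
      by_cases hvb : v = b
      · subst hvb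
        have hcond : ∀ x : X, ((x, v) ∈ (a, v) :: (v :: r).zip r) ↔ x = a := by
          intro x
          constructor
          · intro hy
            rcases List.mem_cons.mp hy with h1 | h1
            · exact (Prod.mk.injEq .. ▸ h1).1
            · exact absurd (List.of_mem_zip h1).2 hbr
          · rintro rfl; exact List.mem_cons_self
        simp only [List.tail_cons, List.zip_cons_cons, hcond]
        simp
      · have hcond : ∀ x : X, ((x, v) ∈ (a, b) :: (b :: r).zip r) ↔ (x, v) ∈ (b :: r).zip r := by
          intro x
          constructor
          · intro hy
            rcases List.mem_cons.mp hy with h1 | h1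
            · exact absurd (Prod.mk.injEq .. ▸ h1).2 hvb
            · exact h1
          · intro hy; exact List.mem_cons_of_mem _ hy
        refine (Finset.sum_congr rfl (fun y _ => if_congr (hcond y) rfl rfl)).trans ?_
        have := ih (List.nodup_cons.mp hn).2 v
        simp only [List.tail_cons] at this
        refine this.trans ?_
        exact if_congr (by simp [hvb]) rfl rfl

lemma duplicate_split {α : Type*} {x : α} {l : List α} (h : List.Duplicate x l) :
    ∃ l₁ l₂, l = l₁ ++ x :: l₂ ∧ x ∈ l₂ := by
  induction h with
  | cons_mem hm => exact ⟨[], _, rfl, hm⟩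
  | @cons_duplicate y l' _ ih =>
    obtain ⟨l₁, l₂, rfl, hx⟩ := ih
    exact ⟨y :: l₁, l₂, rfl, hx⟩

lemma exists_nodup_dipath {X : Type*} {A : X → X → Prop} {s t : X} :
    ∀ (n : ℕ) (l : List X), l.length = n → IsDipath A s t l →
      ∃ l', IsDipath A s t l' ∧ l'.Nodup := by
  intro n
  induction n using Nat.strong_induction_on with
  | _ n ih =>
    intro l hlen hl
    by_cases hnd : l.Nodup
    · exact ⟨l, hl, hnd⟩
    · obtain ⟨x, hx⟩ := List.exists_duplicate_iff_not_nodup.mpr hnd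
      obtain ⟨l₁, l₂, rfl, hx2⟩ := duplicate_split hx
      obtain ⟨l₃, l₄, rfl⟩ := List.append_of_mem hx2
      obtain ⟨hchain, hhead, hlast⟩ := hl
      have hc1 := List.isChain_append.mp hchain
      refine ih (l₁ ++ x :: l₄).length ?_ _ rfl ⟨?_, ?_, ?_⟩
      · subst hlen; simp <;> omega
      · refine List.isChain_append.mpr ⟨hc1.1, ?_, ?_⟩
        · exact hchain.suffix ⟨l₁ ++ (x :: l₃), by simp⟩
        · intro a ha y hy
          simp only [List.head?_cons, Option.mem_def, Option.some.injEq] at hy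
          subst hy
          exact hc1.2.2 a ha x rfl
      · cases l₁ with
        | nil => simpa using hhead
        | cons a m => simpa using hhead
      · rw [List.getLast?_append_cons]
        rw [show (l₁ ++ x :: (l₃ ++ x :: l₄) : List X) = (l₁ ++ x :: l₃) ++ x :: l₄ by simp,
          List.getLast?_append_cons] at hlast
        exact hlast

lemma key_induction {X : Type*} [Fintype X] [DecidableEq X]
    (A : X → X → Prop) (s t : X) (hst : s ≠ t) (Uset : Finset X)
    (hsU : s ∉ Uset)
    (hUpath : ∀ l : List X, IsDipath A s t l →
      (l.length - 1 - 3) / 2 ≤ (l.filter (fun x => x ∈ Uset)).length)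
    (d : ℕ) (hd : 4 < d)
    (hdist : ∀ l : List X, IsDipath A s t l → d ≤ l.length - 1) :
    ∀ N : ℕ, ∀ g : X → X → ℕ, (∑ x : X, ∑ y : X, g x y) = N →
      (∀ x y : X, ¬ A x y → g x y = 0) →
      (∀ v : X, v ≠ s → v ≠ t → ∑ u : X, g u v = ∑ u : X, g v u) →
      ((∑ u : X, (g s u : ℤ)) - ∑ u : X, (g u s : ℤ)) * ((d : ℤ) - 4)
        ≤ 2 * ∑ u ∈ Uset, ∑ x : X, (g x u : ℤ) := by
  intro N
  induction N using Nat.strong_induction_on with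
  | _ N ih =>
    intro g hN hsupp hcons
    by_cases hval : (∑ u : X, (g s u : ℤ)) - (∑ u : X, (g u s : ℤ)) ≤ 0
    · have h1 : (0:ℤ) ≤ (d:ℤ) - 4 := by
        have : (4:ℤ) < (d:ℤ) := by exact_mod_cast hd
        linarith
      have h2 : (0:ℤ) ≤ 2 * ∑ u ∈ Uset, ∑ x : X, (g x u : ℤ) := by positivity
      nlinarith
    push_neg at hval
    classical
    -- Step 1: reachability from s to t along positive-flow edges
    have hreach : Relation.ReflTransGen (fun x y => 1 ≤ g x y) s t := by
      by_contra hns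
      set S : Finset X := univ.filter (fun x => Relation.ReflTransGen (fun x y => 1 ≤ g x y) s x)
        with hS
      have hsS : s ∈ S := by
        simp only [hS, mem_filter, mem_univ, true_and]
        exact Relation.ReflTransGen.refl
      have htS : t ∉ S := by simp [hS, hns]
      have hzero : ∀ v ∈ S, ∀ u ∈ Sᶜ, g v u = 0 := by
        intro v hv u hu
        by_contra h
        have h1 : 1 ≤ g v u := Nat.one_le_iff_ne_zero.mpr h
        have hu' : u ∈ S := by
          simp only [hS, mem_filter, mem_univ, true_and] at hv ⊢
          exact hv.tail h1
        simp [hu'] at hu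
      have key1 : ∑ v ∈ S, ((∑ u : X, (g v u : ℤ)) - ∑ u : X, (g u v : ℤ))
          = (∑ u : X, (g s u : ℤ)) - ∑ u : X, (g u s : ℤ) := by
        refine Finset.sum_eq_single_of_mem s hsS ?_
        intro v hv hvs
        have hvt : v ≠ t := fun h => htS (h ▸ hv)
        have h0 : ∑ u : X, g u v = ∑ u : X, g v u := hcons v hvs hvt
        have h1 : (∑ u : X, (g u v : ℤ)) = ∑ u : X, (g v u : ℤ) := by
          exact_mod_cast h0
        linarith
      have e1 : ∑ v ∈ S, ∑ u : X, (g v u : ℤ)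
          = ∑ v ∈ S, ∑ u ∈ S, (g v u : ℤ) + ∑ v ∈ S, ∑ u ∈ Sᶜ, (g v u : ℤ) := by
        rw [← Finset.sum_add_distrib]
        exact Finset.sum_congr rfl fun v _ => (Finset.sum_add_sum_compl S _).symm
      have e2 : ∑ v ∈ S, ∑ u : X, (g u v : ℤ)
          = ∑ v ∈ S, ∑ u ∈ S, (g u v : ℤ) + ∑ v ∈ S, ∑ u ∈ Sᶜ, (g u v : ℤ) := by
        rw [← Finset.sum_add_distrib]
        exact Finset.sum_congr rfl fun v _ => (Finset.sum_add_sum_compl S _).symm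
      have e3 : ∑ v ∈ S, ∑ u ∈ S, (g v u : ℤ) = ∑ v ∈ S, ∑ u ∈ S, (g u v : ℤ) :=
        Finset.sum_comm
      have e4 : ∑ v ∈ S, ∑ u ∈ Sᶜ, (g v u : ℤ) = 0 :=
        Finset.sum_eq_zero fun v hv => Finset.sum_eq_zero fun u hu => by
          rw [hzero v hv u hu]; rfl
      have e5 : (0:ℤ) ≤ ∑ v ∈ S, ∑ u ∈ Sᶜ, (g u v : ℤ) := by positivity
      rw [Finset.sum_sub_distrib, e1, e2, e3, e4] at key1
      linarith
    -- Step 2: extract a nodup dipath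
    obtain ⟨l0, hchain0, hlast0⟩ := List.exists_isChain_cons_of_relationReflTransGen hreach
    have hdip0 : IsDipath (fun x y => 1 ≤ g x y) s t (s :: l0) := by
      refine ⟨hchain0, rfl, ?_⟩
      rw [List.getLast?_eq_some_getLast (List.cons_ne_nil _ _), hlast0]
    obtain ⟨l, hdipR, hnodup⟩ := exists_nodup_dipath (s :: l0).length (s :: l0) rfl hdip0
    have hRA : ∀ x y : X, 1 ≤ g x y → A x y := by
      intro x y h
      by_contra hA
      rw [hsupp x y hA] at h
      omega
    have hdipA : IsDipath A s t l := ⟨hdipR.1.imp hRA, hdipR.2.1, hdipR.2.2⟩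
    have hlend := hdist l hdipA
    have hlen6 : 6 ≤ l.length := by omega
    have hlne : l ≠ [] := by intro h; rw [h] at hlen6; simp at hlen6
    -- head structure
    obtain ⟨lt', rfl⟩ : ∃ lt', l = s :: lt' := by
      cases l with
      | nil => exact absurd rfl hlne
      | cons a m =>
        have : a = s := by simpa using hdipR.2.1
        exact ⟨m, by rw [this]⟩
    set l : List X := s :: lt' with hldef
    -- basic membership facts
    have hlastval : l.getLast hlne = t := by
      have := List.getLast?_eq_some_getLast hlne
      rw [hdipR.2.2] at this
      exact (Option.some.injEq _ _ ▸ this.symm)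
    have hdldecomp : l.dropLast ++ [t] = l := by
      have := List.dropLast_append_getLast hlne
      rw [hlastval] at this
      exact this
    have hsdrop : s ∈ l.dropLast := by
      have hs : s ∈ l := List.mem_cons_self
      rw [← hdldecomp] at hs
      rcases List.mem_append.mp hs with h | h
      · exact h
      · simp at h; exact absurd h hst
    have hsnt : s ∉ l.tail := by
      have := hnodup
      rw [hldef, List.nodup_cons] at this
      simpa [hldef] using this.1
    have httail : t ∈ l.tail := by
      have ht : t ∈ l := by rw [← hdldecomp]; simp
      rcases List.mem_cons.mp ht with h | h
      · exact absurd h.symm hst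
      · simpa [hldef] using h
    have htnd : t ∉ l.dropLast := by
      intro hmem
      have hnd2 : (l.dropLast ++ [t]).Nodup := by rw [hdldecomp]; exact hnodup
      exact (List.disjoint_of_nodup_append hnd2) hmem (by simp)
    have hmem_tail_iff : ∀ v : X, v ≠ s → (v ∈ l.tail ↔ v ∈ l) := by
      intro v hv
      constructor
      · intro h; exact List.mem_of_mem_tail h
      · intro h
        rcases List.mem_cons.mp h with h1 | h1
        · exact absurd h1 hv
        · simpa [hldef] using h1
    have hmem_drop_iff : ∀ v : X, v ≠ t → (v ∈ l.dropLast ↔ v ∈ l) := by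
      intro v hv
      constructor
      · intro h
        rw [← hdldecomp]; exact List.mem_append.mpr (Or.inl h)
      · intro h
        rw [← hdldecomp] at h
        rcases List.mem_append.mp h with h1 | h1
        · exact h1
        · simp at h1; exact absurd h1 hv
    -- the path-edge indicator and the reduced flow
    set e : X → X → ℕ := fun x y => if (x, y) ∈ l.zip l.tail then 1 else 0 with hedef
    have heg : ∀ x y : X, e x y ≤ g x y := by
      intro x y
      rw [hedef]
      dsimp only
      split
      · exact rel_of_mem_zip hdipR.1 x y ‹_›
      · exact Nat.zero_le _
    have hedrop : ∀ v : X, ∑ y : X, e v y = if v ∈ l.dropLast then 1 else 0 :=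
      sum_out_path l hnodup
    have hetail : ∀ v : X, ∑ x : X, e x v = if v ∈ l.tail then 1 else 0 :=
      sum_in_path l hnodup
    set g' : X → X → ℕ := fun x y => g x y - e x y with hg'def
    have hgin : ∀ v : X, ∑ x : X, g' x v = ∑ x : X, g x v - (if v ∈ l.tail then 1 else 0) := by
      intro v
      rw [← hetail v]
      exact Finset.sum_tsub_distrib _ fun x _ => heg x v
    have hgout : ∀ v : X, ∑ x : X, g' v x = ∑ x : X, g v x - (if v ∈ l.dropLast then 1 else 0) := by
      intro v
      rw [← hedrop v]
      exact Finset.sum_tsub_distrib _ fun x _ => heg v x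
    have hinle : ∀ v : X, (if v ∈ l.tail then 1 else 0) ≤ ∑ x : X, g x v := by
      intro v
      rw [← hetail v]
      exact Finset.sum_le_sum fun x _ => heg x v
    have houtle : ∀ v : X, (if v ∈ l.dropLast then 1 else 0) ≤ ∑ x : X, g v x := by
      intro v
      rw [← hedrop v]
      exact Finset.sum_le_sum fun x _ => heg v x
    have hsupp' : ∀ x y : X, ¬ A x y → g' x y = 0 := by
      intro x y h
      rw [hg'def]
      dsimp only
      rw [hsupp x y h]
      exact Nat.zero_sub _
    have hcons' : ∀ v : X, v ≠ s → v ≠ t → ∑ u : X, g' u v = ∑ u : X, g' v u := by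
      intro v hv1 hv2
      rw [hgin v, hgout v, hcons v hv1 hv2]
      congr 1
      rw [if_congr ((hmem_tail_iff v hv1).trans (hmem_drop_iff v hv2).symm) rfl rfl]
    -- strict decrease of total flow
    have htot : ∑ x : X, ∑ y : X, g' x y = N - ∑ x : X, ∑ y : X, e x y := by
      rw [← hN]
      rw [show (∑ x : X, ∑ y : X, g' x y) = ∑ x : X, (∑ y : X, g x y - ∑ y : X, e x y) from
        Finset.sum_congr rfl fun x _ => Finset.sum_tsub_distrib _ fun y _ => heg x y]
      exact Finset.sum_tsub_distrib _ fun x _ => Finset.sum_le_sum fun y _ => heg x y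
    have hepos : 1 ≤ ∑ x : X, ∑ y : X, e x y := by
      have h1 : ∑ y : X, e s y = 1 := by rw [hedrop s, if_pos hsdrop]
      calc (1:ℕ) = ∑ y : X, e s y := h1.symm
        _ ≤ ∑ x : X, ∑ y : X, e x y :=
          Finset.single_le_sum (f := fun x => ∑ y : X, e x y)
            (fun x _ => Nat.zero_le _) (Finset.mem_univ s)
    have heleN : ∑ x : X, ∑ y : X, e x y ≤ N := by
      rw [← hN]
      exact Finset.sum_le_sum fun x _ => Finset.sum_le_sum fun y _ => heg x y
    have hlt : ∑ x : X, ∑ y : X, g' x y < N := by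
      rw [htot]
      exact Nat.sub_lt (by omega) (by omega)
    have hIH := ih _ hlt g' rfl hsupp' hcons'
    -- rewrite the induction hypothesis
    have castin : ∀ v : X, (∑ x : X, (g' x v : ℤ))
        = (∑ x : X, (g x v : ℤ)) - (if v ∈ l.tail then (1:ℤ) else 0) := by
      intro v
      have h2 : ((∑ x : X, g' x v : ℕ) : ℤ)
          = ((∑ x : X, g x v : ℕ) : ℤ) - ((if v ∈ l.tail then 1 else 0 : ℕ) : ℤ) := by
        rw [hgin v, Nat.cast_sub (hinle v)]
      push_cast at h2
      simpa using h2
    have castout : ∀ v : X, (∑ x : X, (g' v x : ℤ))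
        = (∑ x : X, (g v x : ℤ)) - (if v ∈ l.dropLast then (1:ℤ) else 0) := by
      intro v
      have h2 : ((∑ x : X, g' v x : ℕ) : ℤ)
          = ((∑ x : X, g v x : ℕ) : ℤ) - ((if v ∈ l.dropLast then 1 else 0 : ℕ) : ℤ) := by
        rw [hgout v, Nat.cast_sub (houtle v)]
      push_cast at h2
      simpa using h2
    have a1 : (∑ u : X, (g' s u : ℤ)) = (∑ u : X, (g s u : ℤ)) - 1 := by
      rw [castout s, if_pos hsdrop]
    have a2 : (∑ u : X, (g' u s : ℤ)) = ∑ u : X, (g u s : ℤ) := by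
      rw [castin s, if_neg hsnt]; ring
    set k : ℕ := (l.filter (fun x => x ∈ Uset)).length with hkdef
    have a3 : ∑ u ∈ Uset, ∑ x : X, (g' x u : ℤ)
        = (∑ u ∈ Uset, ∑ x : X, (g x u : ℤ)) - (k : ℤ) := by
      have h1 : ∑ u ∈ Uset, ∑ x : X, (g' x u : ℤ)
          = (∑ u ∈ Uset, ∑ x : X, (g x u : ℤ))
            - ∑ u ∈ Uset, (if u ∈ l.tail then (1:ℤ) else 0) := by
        rw [← Finset.sum_sub_distrib]
        exact Finset.sum_congr rfl fun u _ => castin u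
      rw [h1]
      congr 1
      have h2 : ∑ u ∈ Uset, (if u ∈ l.tail then (1:ℤ) else 0)
          = ∑ u ∈ Uset, (if u ∈ l then (1:ℤ) else 0) := by
        refine Finset.sum_congr rfl fun u hu => ?_
        have hus : u ≠ s := fun h => hsU (h ▸ hu)
        rw [if_congr (hmem_tail_iff u hus) rfl rfl]
      rw [h2, Finset.sum_boole]
      have h3 : Uset.filter (fun u => u ∈ l) = l.toFinset.filter (fun x => x ∈ Uset) := by
        ext x
        simp only [Finset.mem_filter, List.mem_toFinset]
        tauto
      have h4 : (l.filter (fun x => x ∈ Uset)).toFinset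
          = l.toFinset.filter (fun x => x ∈ Uset) := by
        rw [List.toFinset_filter]
        simp
      have h5 : k = (l.toFinset.filter (fun x => x ∈ Uset)).card := by
        rw [hkdef, ← h4, List.toFinset_card_of_nodup (hnodup.filter _)]
      rw [h3, ← h5]
    have hk : (d : ℤ) - 4 ≤ 2 * (k : ℤ) := by
      have h1 := hUpath l hdipA
      rw [← hkdef] at h1
      omega
    rw [a1, a2, a3] at hIH
    have hexp : ((∑ u : X, (g s u : ℤ)) - ∑ u : X, (g u s : ℤ)) * ((d : ℤ) - 4)
        = ((∑ u : X, (g s u : ℤ)) - 1 - ∑ u : X, (g u s : ℤ)) * ((d : ℤ) - 4)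
          + ((d : ℤ) - 4) := by ring
    rw [hexp]
    linarith

theorem residual_flow_bound {X : Type*} [Fintype X] [DecidableEq X]
    (A : X → X → Prop) (s t : X) (hst : s ≠ t) (Uset : Finset X)
    (hsU : s ∉ Uset) (htU : t ∉ Uset)
    (hin : ∀ u ∈ Uset, {x : X | A x u}.ncard = 1)
    (hUpath : ∀ l : List X, IsDipath A s t l →
      (l.length - 1 - 3) / 2 ≤ (l.filter (fun x => x ∈ Uset)).length)
    (d : ℕ) (hd : 4 < d)
    (hdist : ∀ l : List X, IsDipath A s t l → d ≤ l.length - 1)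
    (f : X → X → ℕ)
    (hcap : ∀ x y : X, f x y ≤ 1)
    (hsupp : ∀ x y : X, ¬ A x y → f x y = 0)
    (hcons : ∀ v : X, v ≠ s → v ≠ t → ∑ u : X, f u v = ∑ u : X, f v u) :
    ((∑ u : X, f s u : ℤ) - ∑ u : X, f u s) * ((d : ℤ) - 4)
      ≤ 2 * (Uset.card : ℤ) := by
  have h1 := key_induction A s t hst Uset hsU hUpath d hd hdist
    (∑ x : X, ∑ y : X, f x y) f rfl hsupp hcons
  have h2 : ∑ u ∈ Uset, ∑ x : X, (f x u : ℤ) ≤ (Uset.card : ℤ) := by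
    have h3 : ∀ u ∈ Uset, ∑ x : X, (f x u : ℤ) ≤ 1 := by
      intro u hu
      obtain ⟨a, ha⟩ := Set.ncard_eq_one.mp (hin u hu)
      have h4 : ∑ x : X, (f x u : ℤ) = (f a u : ℤ) := by
        refine Fintype.sum_eq_single a ?_
        intro b hb
        have hbA : ¬ A b u := by
          intro hA
          have : b ∈ ({a} : Set X) := ha ▸ hA
          exact hb (by simpa using this)
        rw [hsupp b u hbA]
        rfl
      rw [h4]
      exact_mod_cast hcap a u
    calc ∑ u ∈ Uset, ∑ x : X, (f x u : ℤ) ≤ ∑ u ∈ Uset, (1:ℤ) := Finset.sum_le_sum h3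
      _ = (Uset.card : ℤ) := by simp
  push_cast at h1 ⊢
  linarith
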